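/- For Dueck's deterministic MAC W as above, if (y₁ⁿ, y₂ⁿ) is a good output (at most n/2 coordinates of y₁ⁿ in {c,C}), then the number of input pairs (x₁ⁿ, x₂ⁿ) ∈ 𝒳₁ⁿ × {0,1}ⁿ with Wⁿ(x₁ⁿ,x₂ⁿ) = (y₁ⁿ,y₂ⁿ) is exactly 2^{ℰ(y₁ⁿ)}, which is at most 2^{n/2}. Moreover x₂ⁿ is uniquely determined: x₂ⁿ = y₂ⁿ. -/

import Mathlib

open scoped BigOperators Classical

/-- First-encoder input alphabet `𝒳₁ = {a, b, A, B}` of Dueck's MAC. -/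
inductive DXA | a | b | A | B
deriving DecidableEq

instance : Fintype DXA := ⟨{.a, .b, .A, .B}, fun x => by cases x <;> simp⟩

/-- First output component alphabet `𝒴₁ = {a, b, c, A, B, C}` of Dueck's MAC. -/
inductive DYA | a | b | c | A | B | C
deriving DecidableEq

instance : Fintype DYA := ⟨{.a, .b, .c, .A, .B, .C}, fun x => by cases x <;> simp⟩

/-- Dueck's deterministic MAC `W : 𝒳₁ × {0,1} → 𝒴₁ × {0,1}`. -/
def DW : DXA → Bool → DYA × Bool
  | .a, false => (.c, false)
  | .b, false => (.c, false)
  | .A, true  => (.C, true)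
  | .B, true  => (.C, true)
  | .a, true  => (.a, true)
  | .b, true  => (.b, true)
  | .A, false => (.A, false)
  | .B, false => (.B, false)

/-- Number of erased coordinates (`c` or `C`) of an output word. -/
noncomputable def erasures (n : ℕ) (y : Fin n → DYA) : ℕ :=
  (Finset.univ.filter fun t => y t = DYA.c ∨ y t = DYA.C).card

/-- An output word is good if at most half of its coordinates are erased. -/
def GoodOut (n : ℕ) (y : Fin n → DYA) : Prop := 2 * erasures n y ≤ n

lemma DW_snd (x : DXA) (b : Bool) : (DW x b).2 = b := by
  cases x <;> cases b <;> rfl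

/-- For a good achievable output `(y₁ⁿ,y₂ⁿ)` of Dueck's MAC, the preimage has exactly
`2^{ℰ(y₁ⁿ)} ≤ 2^{n/2}` elements, and `x₂ⁿ` is uniquely determined: `x₂ⁿ = y₂ⁿ`. -/
theorem dueck_preimage_count (n : ℕ) (y₁ : Fin n → DYA) (y₂ : Fin n → Bool)
    (hach : ∃ (x₁ : Fin n → DXA) (x₂ : Fin n → Bool),
      ∀ t, DW (x₁ t) (x₂ t) = (y₁ t, y₂ t))
    (hgood : GoodOut n y₁) :
    (Finset.univ.filter fun p : (Fin n → DXA) × (Fin n → Bool) =>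
        ∀ t, DW (p.1 t) (p.2 t) = (y₁ t, y₂ t)).card = 2 ^ erasures n y₁ ∧
    (((Finset.univ.filter fun p : (Fin n → DXA) × (Fin n → Bool) =>
        ∀ t, DW (p.1 t) (p.2 t) = (y₁ t, y₂ t)).card : ℝ) ≤ 2 ^ ((n : ℝ) / 2)) ∧
    ∀ p ∈ (Finset.univ.filter fun p : (Fin n → DXA) × (Fin n → Bool) =>
        ∀ t, DW (p.1 t) (p.2 t) = (y₁ t, y₂ t)), p.2 = y₂ := by
  classical
  set F := (Finset.univ.filter fun p : (Fin n → DXA) × (Fin n → Bool) =>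
      ∀ t, DW (p.1 t) (p.2 t) = (y₁ t, y₂ t)) with hF
  have hsnd : ∀ p ∈ F, p.2 = y₂ := by
    intro p hp
    rw [hF, Finset.mem_filter] at hp
    funext t
    have := congrArg Prod.snd (hp.2 t)
    simpa [DW_snd] using this
  -- per-coordinate solution sets
  set S : Fin n → Finset DXA := fun t =>
    Finset.univ.filter fun x => DW x (y₂ t) = (y₁ t, y₂ t) with hS
  have hScard : ∀ t, (S t).card = if y₁ t = DYA.c ∨ y₁ t = DYA.C then 2 else 1 := by
    intro t
    obtain ⟨x₁, x₂, hx⟩ := hach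
    have hx2 : x₂ t = y₂ t := by
      have := congrArg Prod.snd (hx t)
      simpa [DW_snd] using this
    have hxt := hx t
    rw [hx2] at hxt
    rw [hS]
    simp only []
    cases hx1 : x₁ t <;> rw [hx1] at hxt <;> cases hy2 : y₂ t <;> rw [hy2] at hxt <;>
      simp only [DW, Prod.mk.injEq] at hxt <;>
      rw [← hxt.1] <;> decide
  -- bijection: F ≃ piFinset S
  have hcard : F.card = (Fintype.piFinset S).card := by
    apply Finset.card_bij (fun p _ => p.1)
    · intro p hp
      have h2 := hsnd p hp
      rw [hF, Finset.mem_filter] at hp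
      rw [Fintype.mem_piFinset]
      intro t
      rw [hS]
      simp only [Finset.mem_filter, Finset.mem_univ, true_and]
      have hp2 := hp.2 t
      rw [show p.2 t = y₂ t from congrFun h2 t] at hp2
      exact hp2
    · intro p hp q hq hpq
      ext t
      · exact congrFun hpq t
      · rw [hsnd p hp, hsnd q hq]
    · intro x hx
      refine ⟨(x, y₂), ?_, rfl⟩
      rw [hF, Finset.mem_filter]
      refine ⟨Finset.mem_univ _, fun t => ?_⟩
      have := Fintype.mem_piFinset.mp hx t
      rw [hS] at this
      simpa using this
  have hprod : F.card = 2 ^ erasures n y₁ := by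
    rw [hcard, Fintype.card_piFinset]
    rw [Finset.prod_congr rfl (fun t _ => hScard t), ← Finset.prod_filter,
      Finset.prod_const, erasures]
  refine ⟨hprod, ?_, hsnd⟩
  rw [hprod]
  have : ((2:ℝ) ^ erasures n y₁) = (2:ℝ) ^ ((erasures n y₁ : ℝ)) := by
    rw [Real.rpow_natCast]
  push_cast
  rw [this]
  apply Real.rpow_le_rpow_of_exponent_le one_le_two
  have := hgood
  rw [GoodOut] at this
  have : (2 * erasures n y₁ : ℝ) ≤ n := by exact_mod_cast this
  linarith
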